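/- Let N ≥ 1, let T > 0, and let K : ℝ → (Fin N → ℝ) be differentiable on [0, T]. Suppose there are continuous functions C : ℝ → Fin N → Fin N → ℝ with C t i j ≥ 0 for all t ∈ [0, T] and all i, j, such that for all t ∈ [0, T] and all i, the derivative satisfies (K i)'(t) = ∑_j C t i j · (K j t − K i t). Then the function M(t) = max_i K i t is nonincreasing on [0, T] and the function m(t) = min_i K i t is nondecreasing on [0, T]. -/

import Mathlib

open Filter Set Topology

private lemma inf'_eq_neg_sup'_neg {N : ℕ} (hne : (Finset.univ : Finset (Fin N)).Nonempty)
    (f : Fin N → ℝ) :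
    Finset.univ.inf' hne f = - Finset.univ.sup' hne (fun i => - f i) := by
  apply le_antisymm
  · obtain ⟨i, hi, hsup⟩ := Finset.exists_mem_eq_sup' hne (fun i => - f i)
    rw [hsup]
    simpa only [neg_neg] using Finset.inf'_le f hi
  · rw [neg_le]
    obtain ⟨i, hi, hinf⟩ := Finset.exists_mem_eq_inf' hne f
    rw [hinf]
    exact Finset.le_sup' (fun i => - f i) hi

private lemma maxPrinciple_aux {N : ℕ} (hne : (Finset.univ : Finset (Fin N)).Nonempty) (T : ℝ)
    (K : ℝ → Fin N → ℝ) (C : ℝ → Fin N → Fin N → ℝ)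
    (hCnonneg : ∀ t ∈ Set.Icc (0 : ℝ) T, ∀ i j, 0 ≤ C t i j)
    (hODE : ∀ i, ∀ t ∈ Set.Icc (0 : ℝ) T,
      HasDerivAt (fun s => K s i) (∑ j, C t i j * (K t j - K t i)) t) :
    AntitoneOn (fun t => Finset.univ.sup' hne (fun i => K t i)) (Set.Icc 0 T) := by
  set M : ℝ → ℝ := fun t => Finset.univ.sup' hne (fun i => K t i) with hMdef
  have hKc : ∀ i, ∀ x ∈ Icc (0:ℝ) T, ContinuousAt (fun s => K s i) x :=
    fun i x hx => (hODE i x hx).continuousAt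
  have hMc : ∀ x ∈ Icc (0:ℝ) T, ContinuousAt M x := fun x hx =>
    ContinuousAt.finset_sup'_apply hne (fun i _ => hKc i x hx)
  -- key liminf bound on the right slope of M
  have key : ∀ x ∈ Icc (0:ℝ) T, ∀ r : ℝ, 0 < r → ∃ᶠ z in 𝓝[>] x, slope M x z < r := by
    intro x hx r hr
    by_contra hcon
    rw [not_frequently] at hcon
    have hcon' : ∀ᶠ z in 𝓝[>] x, r ≤ slope M x z := hcon.mono (fun z hz => not_lt.1 hz)
    -- find an index that is frequently the argmax near x on the right
    have hex : ∀ z : ℝ, ∃ i : Fin N, M z = K z i := fun z => by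
      obtain ⟨i, _, hi⟩ := Finset.exists_mem_eq_sup' hne (fun i => K z i)
      exact ⟨i, hi⟩
    have hfreq : ∃ i : Fin N, ∃ᶠ z in 𝓝[>] x, M z = K z i := by
      by_contra hc
      push_neg at hc
      have hall : ∀ᶠ z in 𝓝[>] x, ∀ i : Fin N, ¬ M z = K z i := eventually_all.2 hc
      have : ∀ᶠ z in 𝓝[>] x, False := hall.mono (fun z hz => by
        obtain ⟨i, hi⟩ := hex z; exact hz i hi)
      exact this.exists.elim (fun _ h => h)
    obtain ⟨i, hi⟩ := hfreq
    set L : Filter ℝ := 𝓝[>] x ⊓ 𝓟 {z | M z = K z i} with hLdef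
    haveI hLne : L.NeBot := frequently_iff_neBot.1 hi
    have hLle : L ≤ 𝓝[>] x := inf_le_left
    have hLnhds : L ≤ 𝓝 x := hLle.trans nhdsWithin_le_nhds
    have hmem : ∀ᶠ z in L, M z = K z i :=
      le_def.1 (inf_le_right (a := 𝓝[>] x)) {z | M z = K z i} (mem_principal_self _)
    have hgt : ∀ᶠ z in L, x < z := hLle (self_mem_nhdsWithin)
    -- the derivative of K i at x
    set D : ℝ := ∑ j, C x i j * (K x j - K x i) with hDdef
    have hDslope : Tendsto (slope (fun s => K s i) x) L (𝓝 D) := by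
      have h1 := hasDerivAt_iff_tendsto_slope.1 (hODE i x hx)
      exact h1.mono_left (hLle.trans (nhdsWithin_mono x (fun z hz => ne_of_gt hz)))
    -- slope of K i dominates slope of M along L
    have hslope_ge : ∀ᶠ z in L, r ≤ slope (fun s => K s i) x z := by
      filter_upwards [hmem, hgt, hcon'.filter_mono hLle] with z h1 h2 h3
      have hKxi : K x i ≤ M x := Finset.le_sup' (fun j => K x j) (Finset.mem_univ i)
      have : slope M x z ≤ slope (fun s => K s i) x z := by
        rw [slope_def_field, slope_def_field, div_le_div_iff_of_pos_right (by linarith)]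
        rw [← h1]; linarith
      linarith
    have hrD : r ≤ D := ge_of_tendsto hDslope hslope_ge
    -- K x i = M x
    have hKi_eq : K x i = M x := by
      have t1 : Tendsto (fun z => K z i) L (𝓝 (K x i)) := (hKc i x hx).tendsto.mono_left hLnhds
      have t2 : Tendsto M L (𝓝 (M x)) := (hMc x hx).tendsto.mono_left hLnhds
      have t3 : Tendsto M L (𝓝 (K x i)) := t1.congr' (hmem.mono fun z hz => hz.symm)
      exact tendsto_nhds_unique t3 t2
    -- hence D ≤ 0
    have hD0 : D ≤ 0 := by
      apply Finset.sum_nonpos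
      intro j _
      apply mul_nonpos_of_nonneg_of_nonpos (hCnonneg x hx i j)
      have : K x j ≤ M x := Finset.le_sup' (fun k => K x k) (Finset.mem_univ j)
      rw [hKi_eq]; linarith
    linarith
  -- conclude antitonicity via the fencing theorem
  intro s hs t ht hst
  have cont : ContinuousOn M (Icc s t) := fun z hz =>
    (hMc z ⟨hs.1.trans hz.1, hz.2.trans ht.2⟩).continuousWithinAt
  have := image_le_of_liminf_slope_right_le_deriv_boundary (f := M) (a := s) (b := t)
    cont (B := fun _ => M s) (B' := fun _ => 0) (le_refl (M s)) continuousOn_const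
    (fun x _ => hasDerivWithinAt_const x _ (M s))
    (fun x hx r hr => key x ⟨hs.1.trans hx.1, (hx.2.le.trans ht.2)⟩ r hr)
  exact this ⟨hst, le_refl t⟩

/-- The maximum principle for the combinatorial curvature evolution
(Corollary 3.3 (1), Euclidean background geometry): if the curvatures `K i` evolve by
`(K i)' = ∑ j, C i j (K j − K i)` with nonnegative continuous coefficients, then the
maximal curvature is nonincreasing and the minimal curvature is nondecreasing on
`[0, T]`. -/
theorem combinatorial_maximum_principle_euclidean
    (N : ℕ) (hN : 0 < N) (T : ℝ) (hT : 0 < T)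
    (K : ℝ → Fin N → ℝ) (C : ℝ → Fin N → Fin N → ℝ)
    (hCcont : ∀ i j, Continuous fun t => C t i j)
    (hCnonneg : ∀ t ∈ Set.Icc (0 : ℝ) T, ∀ i j, 0 ≤ C t i j)
    (hODE : ∀ i, ∀ t ∈ Set.Icc (0 : ℝ) T,
      HasDerivAt (fun s => K s i) (∑ j, C t i j * (K t j - K t i)) t) :
    AntitoneOn
      (fun t => Finset.univ.sup'
        (Finset.univ_nonempty_iff.mpr (Fin.pos_iff_nonempty.mp hN)) (fun i => K t i))
      (Set.Icc 0 T) ∧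
    MonotoneOn
      (fun t => Finset.univ.inf'
        (Finset.univ_nonempty_iff.mpr (Fin.pos_iff_nonempty.mp hN)) (fun i => K t i))
      (Set.Icc 0 T) := by
  have hne : (Finset.univ : Finset (Fin N)).Nonempty :=
    Finset.univ_nonempty_iff.mpr (Fin.pos_iff_nonempty.mp hN)
  constructor
  · exact maxPrinciple_aux hne T K C hCnonneg hODE
  · -- min principle via negation
    have hODE' : ∀ i, ∀ t ∈ Set.Icc (0 : ℝ) T,
        HasDerivAt (fun s => -(K s i)) (∑ j, C t i j * ((-(K t j)) - (-(K t i)))) t := by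
      intro i t ht
      have := (hODE i t ht).neg
      refine HasDerivAt.congr_deriv this ?_
      rw [← Finset.sum_neg_distrib]
      apply Finset.sum_congr rfl
      intro j _
      ring
    have hanti := maxPrinciple_aux hne T (fun t i => -(K t i)) C hCnonneg hODE'
    intro s hs t ht hst
    have h1 := hanti hs ht hst
    show Finset.univ.inf' hne (fun i => K s i) ≤ Finset.univ.inf' hne (fun i => K t i)
    rw [inf'_eq_neg_sup'_neg hne (fun i => K s i), inf'_eq_neg_sup'_neg hne (fun i => K t i)]
    simp only at h1
    simpa using neg_le_neg h1
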